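/- In the multi-period model with per-period demands, binary valuations (v_{ij} ∈ {0,1}) and unit budgets (B_i = 1), assume there exists a feasible allocation with u_i^t > 0 for all i and t. Then a feasible allocation x with u_i^t(x_i^t) > 0 for all i, t maximizes Π_i Π_t u_i^t(x_i^t) over all feasible allocations (equivalently, maximizes the program EG-Time-geo-mean) if and only if it is leximin-optimal with respect to the vector (u_i^t(x_i^t))_{i∈[n], t∈[T]} of per-buyer-per-period utilities. -/

import Mathlib

open Finset

/-- Feasibility of a multi-period allocation: nonnegativity, per-period supply
constraints, and overall supply constraints. -/
def FeasibleMP (n m T : ℕ) (st : Fin m → Fin T → ℝ) (s : Fin m → ℝ)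
    (x : Fin n → Fin m → Fin T → ℝ) : Prop :=
  (∀ i j t, 0 ≤ x i j t) ∧ (∀ j t, ∑ i, x i j t ≤ st j t) ∧
    (∀ j, ∑ t, ∑ i, x i j t ≤ s j)

/-- The value at position `i` of the nondecreasing rearrangement of `v`. -/
noncomputable def sortedVal {n : ℕ} (v : Fin n → ℝ) (i : Fin n) : ℝ :=
  v (Tuple.sort v i)

/-- `v` is leximin-greater than `w`: after sorting both vectors in
nondecreasing order, at the first index where they differ `v` is strictly
larger. -/
noncomputable def LexGt {n : ℕ} (v w : Fin n → ℝ) : Prop :=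
  ∃ k : Fin n, (∀ i : Fin n, i < k → sortedVal v i = sortedVal w i) ∧
    sortedVal w k < sortedVal v k

/-- The vector of per-buyer-per-period utilities of a multi-period allocation,
indexed by `Fin (n * T)`. -/
noncomputable def perPeriodUtilVec (n m T : ℕ) (v : Fin n → Fin m → ℝ)
    (d : Fin n → Fin T → ℝ) (x : Fin n → Fin m → Fin T → ℝ)
    (k : Fin (n * T)) : ℝ :=
  (∑ j, v (finProdFinEquiv.symm k).1 j * x (finProdFinEquiv.symm k).1 j
      (finProdFinEquiv.symm k).2) -
    d (finProdFinEquiv.symm k).1 (finProdFinEquiv.symm k).2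

namespace MNWdev


variable {n m T : ℕ} (v : Fin n → Fin m → ℝ) (d : Fin n → Fin T → ℝ)
  (st : Fin m → Fin T → ℝ) (s : Fin m → ℝ)

/-- per-agent-period utility -/
def util (x : Fin n → Fin m → Fin T → ℝ) (p : Fin n × Fin T) : ℝ :=
  (∑ j, v p.1 j * x p.1 j p.2) - d p.1 p.2

/-- total usage of item j -/
def tot (x : Fin n → Fin m → Fin T → ℝ) (j : Fin m) : ℝ := ∑ t, ∑ i, x i j t

/-- perturb one coordinate -/
def bump (x : Fin n → Fin m → Fin T → ℝ) (i₁ : Fin n) (j₁ : Fin m) (t₁ : Fin T) (c : ℝ) :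
    Fin n → Fin m → Fin T → ℝ :=
  fun i j t => x i j t + if i = i₁ ∧ j = j₁ ∧ t = t₁ then c else 0

lemma ite_neg_zero (P : Prop) [Decidable P] (c : ℝ) :
    (if P then (-c) else 0) = -(if P then c else 0) := by
  by_cases h : P <;> simp [h]

lemma sum_bump_i (x : Fin n → Fin m → Fin T → ℝ) (i₁ j₁ t₁) (c : ℝ) (j t) :
    ∑ i, bump x i₁ j₁ t₁ c i j t = (∑ i, x i j t) + if j = j₁ ∧ t = t₁ then c else 0 := by
  unfold bump
  rw [Finset.sum_add_distrib]
  congr 1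
  by_cases h : j = j₁ ∧ t = t₁
  · simp only [h, and_true]
    rw [Finset.sum_ite_eq' univ i₁]
    simp [h]
  · rw [if_neg h]
    apply Finset.sum_eq_zero
    intro i _
    rw [if_neg]
    tauto

lemma tot_bump (x : Fin n → Fin m → Fin T → ℝ) (i₁ j₁ t₁) (c : ℝ) (j) :
    tot (bump x i₁ j₁ t₁ c) j = tot x j + if j = j₁ then c else 0 := by
  unfold tot
  have : ∀ t, ∑ i, bump x i₁ j₁ t₁ c i j t = (∑ i, x i j t) + if j = j₁ ∧ t = t₁ then c else 0 :=
    fun t => sum_bump_i x i₁ j₁ t₁ c j t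
  simp only [this]
  rw [Finset.sum_add_distrib]
  congr 1
  by_cases h : j = j₁
  · simp only [h, true_and]
    rw [Finset.sum_ite_eq' univ t₁]
    simp [h]
  · rw [if_neg h]
    apply Finset.sum_eq_zero
    intro t _
    rw [if_neg]
    tauto

lemma util_bump (x : Fin n → Fin m → Fin T → ℝ) (i₁ j₁ t₁) (c : ℝ)
    (hv1 : v i₁ j₁ = 1) (p : Fin n × Fin T) :
    util v d (bump x i₁ j₁ t₁ c) p = util v d x p + if p = (i₁, t₁) then c else 0 := by
  unfold util bump
  have h1 : ∀ j, v p.1 j * (x p.1 j p.2 + if p.1 = i₁ ∧ j = j₁ ∧ p.2 = t₁ then c else 0)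
      = v p.1 j * x p.1 j p.2 + (if p.1 = i₁ ∧ j = j₁ ∧ p.2 = t₁ then v p.1 j * c else 0) := by
    intro j
    by_cases h : p.1 = i₁ ∧ j = j₁ ∧ p.2 = t₁ <;> simp [h, mul_add]
  simp only [h1]
  rw [Finset.sum_add_distrib]
  have h2 : (∑ j, if p.1 = i₁ ∧ j = j₁ ∧ p.2 = t₁ then v p.1 j * c else 0)
      = if p = (i₁, t₁) then c else 0 := by
    by_cases h : p.1 = i₁ ∧ p.2 = t₁
    · have : ∀ j, (p.1 = i₁ ∧ j = j₁ ∧ p.2 = t₁) = (j = j₁) := by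
        intro j; simp [h.1, h.2]
      simp only [this]
      rw [Finset.sum_ite_eq' univ j₁]
      have hp : p = (i₁, t₁) := Prod.ext h.1 h.2
      simp only [hp, Finset.mem_univ, if_true]
      rw [hv1, one_mul]
    · have hp : p ≠ (i₁, t₁) := by
        intro hc; subst hc; exact h ⟨rfl, rfl⟩
      rw [if_neg hp]
      apply Finset.sum_eq_zero
      intro j _
      rw [if_neg]
      tauto
  rw [h2]
  ring

/-- residual reachability to the set A of agent-periods -/
inductive Reach (v : Fin n → Fin m → ℝ) (st : Fin m → Fin T → ℝ)
    (x : Fin n → Fin m → Fin T → ℝ) (A : Finset (Fin n × Fin T)) :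
    ((Fin n × Fin T) ⊕ Fin m) → Prop
  | base (p : Fin n × Fin T) (hp : p ∈ A) : Reach v st x A (.inl p)
  | stepA (i i' : Fin n) (j : Fin m) (t : Fin T) (hx : 0 < x i j t) (hv1 : v i' j = 1)
      (h : Reach v st x A (.inl (i', t))) : Reach v st x A (.inl (i, t))
  | stepB (i : Fin n) (j : Fin m) (t : Fin T) (hx : 0 < x i j t)
      (h : Reach v st x A (.inr j)) : Reach v st x A (.inl (i, t))
  | stepJ (j : Fin m) (t : Fin T) (i' : Fin n) (hsl : ∑ i, x i j t < st j t) (hv1 : v i' j = 1)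
      (h : Reach v st x A (.inl (i', t))) : Reach v st x A (.inr j)

/-- common part of the augmentation invariant -/
def Com (x z : Fin n → Fin m → Fin T → ℝ) (C : ℕ) (ε : ℝ) : Prop :=
  (∀ i j t, 0 ≤ z i j t) ∧ (∀ i j t, x i j t - (C : ℝ) * ε ≤ z i j t) ∧
  (∀ j t, ∑ i, z i j t ≤ st j t) ∧ (∀ j t, ∑ i, z i j t ≤ (∑ i, x i j t) + (C : ℝ) * ε)

def AugGoal (x : Fin n → Fin m → Fin T → ℝ) (A : Finset (Fin n × Fin T)) :
    ((Fin n × Fin T) ⊕ Fin m) → Prop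
  | .inl b => ∃ a ∈ A, ∃ C : ℕ, ∃ ε₀ : ℝ, 0 < ε₀ ∧ ∀ ε : ℝ, 0 < ε → ε ≤ ε₀ → ∃ z,
      Com st x z C ε ∧ (∀ j, tot z j ≤ tot x j) ∧
      (∀ p, util v d z p = util v d x p + (if p = a then ε else 0) - (if p = b then ε else 0))
  | .inr j₀ => ∃ a ∈ A, ∃ C : ℕ, ∃ ε₀ : ℝ, 0 < ε₀ ∧ ∀ ε : ℝ, 0 < ε → ε ≤ ε₀ → ∃ z,
      Com st x z C ε ∧ (∀ j, j ≠ j₀ → tot z j ≤ tot x j) ∧ (tot z j₀ ≤ tot x j₀ + ε) ∧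
      (∀ p, util v d z p = util v d x p + (if p = a then ε else 0))



lemma reach_aug (x : Fin n → Fin m → Fin T → ℝ)
    (hx0 : ∀ i j t, 0 ≤ x i j t) (hxst : ∀ j t, ∑ i, x i j t ≤ st j t)
    (hsupp : ∀ i j t, x i j t ≠ 0 → v i j = 1)
    {A : Finset (Fin n × Fin T)} {nd} (h : Reach v st x A nd) :
    AugGoal v d st x A nd := by
  induction h with
  | base p hp =>
      refine ⟨p, hp, 0, 1, one_pos, fun ε hε hε1 => ⟨x, ?_, ?_, ?_⟩⟩
      · exact ⟨hx0, by intro i j t; simp, hxst, by intro j t; simp⟩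
      · intro j; exact le_refl _
      · intro q; by_cases hq : q = p <;> simp [hq]
  | stepA i i' j t hx hv1 h IH =>
      obtain ⟨a, ha, C, ε₀, hε₀, H⟩ := IH
      have hvij : v i j = 1 := hsupp i j t (ne_of_gt hx)
      have hC1 : (0:ℝ) < (C:ℝ) + 1 := by positivity
      refine ⟨a, ha, C + 1, min ε₀ (x i j t / ((C:ℝ) + 1)), lt_min hε₀ (by positivity), ?_⟩
      intro ε hε hεle
      have hεε₀ : ε ≤ ε₀ := le_trans hεle (min_le_left _ _)
      have hCe : ((C:ℝ) + 1) * ε ≤ x i j t := by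
        have h2 : ε ≤ x i j t / ((C:ℝ) + 1) := le_trans hεle (min_le_right _ _)
        have h3 := mul_le_mul_of_nonneg_left h2 hC1.le
        have h4 : ((C:ℝ)+1) * (x i j t / ((C:ℝ) + 1)) = x i j t := by field_simp
        linarith
      obtain ⟨z, ⟨hz0, hzc, hzst, hzrel⟩, hztot, hzutil⟩ := H ε hε hεε₀
      set zb := bump z i' j t ε with hzb
      refine ⟨bump zb i j t (-ε), ⟨?_, ?_, ?_, ?_⟩, ?_, ?_⟩
      · -- nonneg
        intro i₀ j₀ t₀
        have hite1 : (0:ℝ) ≤ (if i₀ = i' ∧ j₀ = j ∧ t₀ = t then ε else 0) := by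
          by_cases h1 : i₀ = i' ∧ j₀ = j ∧ t₀ = t <;> simp [h1, hε.le]
        show (0:ℝ) ≤ zb i₀ j₀ t₀ + if i₀ = i ∧ j₀ = j ∧ t₀ = t then -ε else 0
        by_cases h2 : i₀ = i ∧ j₀ = j ∧ t₀ = t
        · rw [if_pos h2]
          have hxeq : x i₀ j₀ t₀ = x i j t := by rw [h2.1, h2.2.1, h2.2.2]
          have hlow := hzc i₀ j₀ t₀
          show (0:ℝ) ≤ (z i₀ j₀ t₀ + if i₀ = i' ∧ j₀ = j ∧ t₀ = t then ε else 0) + -ε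
          linarith
        · rw [if_neg h2]
          have := hz0 i₀ j₀ t₀
          show (0:ℝ) ≤ (z i₀ j₀ t₀ + if i₀ = i' ∧ j₀ = j ∧ t₀ = t then ε else 0) + 0
          linarith
      · -- coordinate lower bound
        intro i₀ j₀ t₀
        have hite1 : (0:ℝ) ≤ (if i₀ = i' ∧ j₀ = j ∧ t₀ = t then ε else 0) := by
          by_cases h1 : i₀ = i' ∧ j₀ = j ∧ t₀ = t <;> simp [h1, hε.le]
        have hlow := hzc i₀ j₀ t₀
        show x i₀ j₀ t₀ - ((C:ℕ)+1 : ℕ) * ε ≤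
          (z i₀ j₀ t₀ + if i₀ = i' ∧ j₀ = j ∧ t₀ = t then ε else 0)
            + if i₀ = i ∧ j₀ = j ∧ t₀ = t then -ε else 0
        push_cast
        by_cases h2 : i₀ = i ∧ j₀ = j ∧ t₀ = t
        · rw [if_pos h2]; linarith
        · rw [if_neg h2]; linarith
      · -- period sums ≤ st
        intro j₀ t₀
        rw [sum_bump_i, sum_bump_i]
        have h5 := hzst j₀ t₀
        by_cases hjt : j₀ = j ∧ t₀ = t
        · rw [if_pos hjt, if_pos hjt]; linarith
        · rw [if_neg hjt, if_neg hjt]; linarith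
      · -- period sums relative
        intro j₀ t₀
        rw [sum_bump_i, sum_bump_i]
        have h5 := hzrel j₀ t₀
        push_cast
        by_cases hjt : j₀ = j ∧ t₀ = t
        · rw [if_pos hjt, if_pos hjt]; linarith
        · rw [if_neg hjt, if_neg hjt]; linarith
      · -- totals
        intro j₀
        rw [tot_bump, tot_bump]
        have h5 := hztot j₀
        by_cases hj : j₀ = j
        · rw [if_pos hj, if_pos hj]; linarith
        · rw [if_neg hj, if_neg hj]; linarith
      · -- utility
        intro q
        rw [util_bump v d zb i j t (-ε) hvij q, hzb,
          util_bump v d z i' j t ε hv1 q, hzutil q, ite_neg_zero]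
        ring
  | stepB i j t hx h IH =>
      obtain ⟨a, ha, C, ε₀, hε₀, H⟩ := IH
      have hvij : v i j = 1 := hsupp i j t (ne_of_gt hx)
      have hC1 : (0:ℝ) < (C:ℝ) + 1 := by positivity
      refine ⟨a, ha, C + 1, min ε₀ (x i j t / ((C:ℝ) + 1)), lt_min hε₀ (by positivity), ?_⟩
      intro ε hε hεle
      have hεε₀ : ε ≤ ε₀ := le_trans hεle (min_le_left _ _)
      have hCe : ((C:ℝ) + 1) * ε ≤ x i j t := by
        have h2 : ε ≤ x i j t / ((C:ℝ) + 1) := le_trans hεle (min_le_right _ _)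
        have h3 := mul_le_mul_of_nonneg_left h2 hC1.le
        have h4 : ((C:ℝ)+1) * (x i j t / ((C:ℝ) + 1)) = x i j t := by field_simp
        linarith
      obtain ⟨z, ⟨hz0, hzc, hzst, hzrel⟩, hztot, hztotj, hzutil⟩ := H ε hε hεε₀
      refine ⟨bump z i j t (-ε), ⟨?_, ?_, ?_, ?_⟩, ?_, ?_⟩
      · intro i₀ j₀ t₀
        show (0:ℝ) ≤ z i₀ j₀ t₀ + if i₀ = i ∧ j₀ = j ∧ t₀ = t then -ε else 0
        by_cases h2 : i₀ = i ∧ j₀ = j ∧ t₀ = t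
        · rw [if_pos h2]
          have hxeq : x i₀ j₀ t₀ = x i j t := by rw [h2.1, h2.2.1, h2.2.2]
          have hlow := hzc i₀ j₀ t₀
          linarith
        · rw [if_neg h2]
          have := hz0 i₀ j₀ t₀
          linarith
      · intro i₀ j₀ t₀
        have hlow := hzc i₀ j₀ t₀
        show x i₀ j₀ t₀ - ((C:ℕ)+1 : ℕ) * ε ≤
          z i₀ j₀ t₀ + if i₀ = i ∧ j₀ = j ∧ t₀ = t then -ε else 0
        push_cast
        by_cases h2 : i₀ = i ∧ j₀ = j ∧ t₀ = t
        · rw [if_pos h2]; linarith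
        · rw [if_neg h2]; linarith
      · intro j₀ t₀
        rw [sum_bump_i]
        have h5 := hzst j₀ t₀
        by_cases hjt : j₀ = j ∧ t₀ = t
        · rw [if_pos hjt]; linarith
        · rw [if_neg hjt]; linarith
      · intro j₀ t₀
        rw [sum_bump_i]
        have h5 := hzrel j₀ t₀
        push_cast
        by_cases hjt : j₀ = j ∧ t₀ = t
        · rw [if_pos hjt]; linarith
        · rw [if_neg hjt]; linarith
      · intro j₀
        rw [tot_bump]
        by_cases hj : j₀ = j
        · rw [if_pos hj, hj]
          linarith
        · rw [if_neg hj]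
          have h5 := hztot j₀ hj
          linarith
      · intro q
        rw [util_bump v d z i j t (-ε) hvij q, hzutil q, ite_neg_zero]
        ring
  | stepJ j t i' hsl hv1 h IH =>
      obtain ⟨a, ha, C, ε₀, hε₀, H⟩ := IH
      have hC1 : (0:ℝ) < (C:ℝ) + 1 := by positivity
      have hslpos : 0 < st j t - ∑ i, x i j t := by linarith
      refine ⟨a, ha, C + 1, min ε₀ ((st j t - ∑ i, x i j t) / ((C:ℝ) + 1)),
        lt_min hε₀ (by positivity), ?_⟩
      intro ε hε hεle
      have hεε₀ : ε ≤ ε₀ := le_trans hεle (min_le_left _ _)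
      have hCe : ((C:ℝ) + 1) * ε ≤ st j t - ∑ i, x i j t := by
        have h2 : ε ≤ (st j t - ∑ i, x i j t) / ((C:ℝ) + 1) := le_trans hεle (min_le_right _ _)
        have h3 := mul_le_mul_of_nonneg_left h2 hC1.le
        have h4 : ((C:ℝ)+1) * ((st j t - ∑ i, x i j t) / ((C:ℝ) + 1))
            = st j t - ∑ i, x i j t := by field_simp
        linarith
      obtain ⟨z, ⟨hz0, hzc, hzst, hzrel⟩, hztot, hzutil⟩ := H ε hε hεε₀
      refine ⟨bump z i' j t ε, ⟨?_, ?_, ?_, ?_⟩, ?_, ?_, ?_⟩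
      · intro i₀ j₀ t₀
        have := hz0 i₀ j₀ t₀
        show (0:ℝ) ≤ z i₀ j₀ t₀ + if i₀ = i' ∧ j₀ = j ∧ t₀ = t then ε else 0
        by_cases h2 : i₀ = i' ∧ j₀ = j ∧ t₀ = t
        · rw [if_pos h2]; linarith
        · rw [if_neg h2]; linarith
      · intro i₀ j₀ t₀
        have hlow := hzc i₀ j₀ t₀
        show x i₀ j₀ t₀ - ((C:ℕ)+1 : ℕ) * ε ≤
          z i₀ j₀ t₀ + if i₀ = i' ∧ j₀ = j ∧ t₀ = t then ε else 0
        push_cast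
        by_cases h2 : i₀ = i' ∧ j₀ = j ∧ t₀ = t
        · rw [if_pos h2]; linarith
        · rw [if_neg h2]; linarith
      · intro j₀ t₀
        rw [sum_bump_i]
        by_cases hjt : j₀ = j ∧ t₀ = t
        · have hrel := hzrel j₀ t₀
          have hst5 : st j₀ t₀ = st j t := by rw [hjt.1, hjt.2]
          have hxx5 : (∑ i, x i j₀ t₀) = ∑ i, x i j t := by rw [hjt.1, hjt.2]
          rw [if_pos hjt, hst5]
          rw [hxx5] at hrel
          linarith
        · have h5 := hzst j₀ t₀
          rw [if_neg hjt]
          linarith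
      · intro j₀ t₀
        rw [sum_bump_i]
        have h5 := hzrel j₀ t₀
        push_cast
        by_cases hjt : j₀ = j ∧ t₀ = t
        · rw [if_pos hjt]; linarith
        · rw [if_neg hjt]; linarith
      · intro j₀ hj
        rw [tot_bump]
        have h5 := hztot j₀
        rw [if_neg hj]
        linarith
      · rw [tot_bump]
        have h5 := hztot j
        rw [if_pos rfl]
        linarith
      · intro q
        rw [util_bump v d z i' j t ε hv1 q, hzutil q]
        ring



lemma util_supported (z : Fin n → Fin m → Fin T → ℝ)
    (hsupp : ∀ i j t, z i j t ≠ 0 → v i j = 1) (p : Fin n × Fin T) :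
    util v d z p = (∑ j, z p.1 j p.2) - d p.1 p.2 := by
  unfold util
  congr 1
  apply Finset.sum_congr rfl
  intro j _
  by_cases hz : z p.1 j p.2 = 0
  · simp [hz]
  · rw [hsupp _ _ _ hz, one_mul]

lemma SS_eq {A : Finset (Fin n × Fin T)} (z : Fin n → Fin m → Fin T → ℝ) :
    ∑ p ∈ A, ∑ j, z p.1 j p.2
      = ∑ q : Fin m × Fin T, ∑ i ∈ univ.filter (fun i => (i, q.2) ∈ A), z i q.1 q.2 := by
  classical
  have h1 : ∑ p ∈ A, ∑ j, z p.1 j p.2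
      = ∑ p : Fin n × Fin T, if p ∈ A then ∑ j, z p.1 j p.2 else 0 := by
    rw [Finset.sum_ite_mem, Finset.univ_inter]
  rw [h1, Fintype.sum_prod_type]
  have h2 : ∀ (i : Fin n) (t : Fin T), (if (i,t) ∈ A then ∑ j, z i j t else 0)
      = ∑ j, if (i,t) ∈ A then z i j t else 0 := by
    intro i t
    by_cases h : (i,t) ∈ A <;> simp [h]
  simp only [h2]
  rw [Fintype.sum_prod_type]
  have h4 : (∑ i, ∑ t, ∑ j, if (i,t) ∈ A then z i j t else 0)
      = ∑ j, ∑ t, ∑ i, if (i,t) ∈ A then z i j t else 0 :=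
    calc (∑ i, ∑ t, ∑ j, if (i,t) ∈ A then z i j t else 0)
        = ∑ t, ∑ i, ∑ j, (if (i,t) ∈ A then z i j t else 0) := Finset.sum_comm
      _ = ∑ t, ∑ j, ∑ i, (if (i,t) ∈ A then z i j t else 0) :=
          Finset.sum_congr rfl (fun t _ => Finset.sum_comm)
      _ = ∑ j, ∑ t, ∑ i, (if (i,t) ∈ A then z i j t else 0) := Finset.sum_comm
  rw [h4]
  apply Finset.sum_congr rfl
  intro j _
  apply Finset.sum_congr rfl
  intro t _
  rw [Finset.sum_filter]

lemma sum_filter_fst (P : Fin m → Prop) [DecidablePred P]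
    (Q : Fin m × Fin T → Prop) [DecidablePred Q] (g : Fin m × Fin T → ℝ) :
    ∑ q ∈ univ.filter (fun q : Fin m × Fin T => Q q ∧ P q.1), g q
      = ∑ j ∈ univ.filter P, ∑ t ∈ univ.filter (fun t => Q (j, t)), g (j, t) := by
  classical
  rw [Finset.sum_filter, Finset.sum_filter, Fintype.sum_prod_type]
  apply Finset.sum_congr rfl
  intro j _
  rw [Finset.sum_filter]
  by_cases hP : P j
  · simp only [hP, if_true]
    apply Finset.sum_congr rfl
    intro t _
    by_cases hQ : Q (j, t) <;> simp [hQ]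
  · simp only [hP, if_false]
    apply Finset.sum_eq_zero
    intro t _
    simp [hP]

lemma cut_sum (x : Fin n → Fin m → Fin T → ℝ)
    (hx0 : ∀ i j t, 0 ≤ x i j t) (hxst : ∀ j t, ∑ i, x i j t ≤ st j t)
    (hxs : ∀ j, tot x j ≤ s j)
    (hsupp : ∀ i j t, x i j t ≠ 0 → v i j = 1)
    {A : Finset (Fin n × Fin T)}
    (H1 : ∀ p, Reach v st x A (.inl p) → p ∈ A)
    (H2 : ∀ j, Reach v st x A (.inr j) → s j ≤ tot x j)
    (y : Fin n → Fin m → Fin T → ℝ)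
    (hy0 : ∀ i j t, 0 ≤ y i j t) (hyst : ∀ j t, ∑ i, y i j t ≤ st j t)
    (hys : ∀ j, tot y j ≤ s j)
    (hysupp : ∀ i j t, y i j t ≠ 0 → v i j = 1) :
    ∑ p ∈ A, util v d y p ≤ ∑ p ∈ A, util v d x p := by
  classical
  have hux : ∑ p ∈ A, util v d x p = (∑ p ∈ A, ∑ j, x p.1 j p.2) - ∑ p ∈ A, d p.1 p.2 := by
    rw [← Finset.sum_sub_distrib]
    exact Finset.sum_congr rfl fun p _ => util_supported v d x hsupp p
  have huy : ∑ p ∈ A, util v d y p = (∑ p ∈ A, ∑ j, y p.1 j p.2) - ∑ p ∈ A, d p.1 p.2 := by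
    rw [← Finset.sum_sub_distrib]
    exact Finset.sum_congr rfl fun p _ => util_supported v d y hysupp p
  rw [hux, huy]
  apply sub_le_sub_right
  -- predicates and reachable sets
  set Qp : Fin m × Fin T → Prop :=
    fun q => (∃ i', v i' q.1 = 1 ∧ (i', q.2) ∈ A) ∨
      (Reach v st x A (.inr q.1) ∧ 0 < ∑ i, x i q.1 q.2) with hQp
  set RJ : Finset (Fin m) := univ.filter (fun j => Reach v st x A (.inr j)) with hRJ
  set RJT : Finset (Fin m × Fin T) := univ.filter Qp with hRJT
  -- basic facts
  have f3 : ∀ q ∈ RJT, ∀ i : Fin n, (i, q.2) ∉ A → x i q.1 q.2 = 0 := by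
    intro q hq i hiA
    by_contra hne
    have hpos : 0 < x i q.1 q.2 := lt_of_le_of_ne (hx0 _ _ _) (Ne.symm hne)
    have hQ : Qp q := (Finset.mem_filter.1 hq).2
    rcases hQ with ⟨i', hv', hA'⟩ | ⟨hr, _⟩
    · exact hiA (H1 _ (Reach.stepA i i' q.1 q.2 hpos hv' (Reach.base _ hA')))
    · exact hiA (H1 _ (Reach.stepB i q.1 q.2 hpos hr))
  have f4 : ∀ j ∈ RJ, ∀ t, (j, t) ∉ RJT → ∑ i, x i j t = 0 := by
    intro j hj t hq
    by_contra hne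
    have hpos : 0 < ∑ i, x i j t :=
      lt_of_le_of_ne (Finset.sum_nonneg fun i _ => hx0 i j t) (Ne.symm hne)
    exact hq (Finset.mem_filter.2 ⟨Finset.mem_univ _,
      Or.inr ⟨(Finset.mem_filter.1 hj).2, hpos⟩⟩)
  have f5 : ∀ q ∈ RJT, q.1 ∉ RJ → ∑ i, x i q.1 q.2 = st q.1 q.2 := by
    intro q hq hjR
    refine le_antisymm (hxst _ _) ?_
    by_contra hlt
    push_neg at hlt
    have hreach : Reach v st x A (.inr q.1) := by
      rcases (Finset.mem_filter.1 hq).2 with ⟨i', hv', hA'⟩ | ⟨hr, _⟩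
      · exact Reach.stepJ q.1 q.2 i' hlt hv' (Reach.base _ hA')
      · exact hr
    exact hjR (Finset.mem_filter.2 ⟨Finset.mem_univ _, hreach⟩)
  have f1 : ∀ j ∈ RJ, tot x j = s j := by
    intro j hj
    exact le_antisymm (hxs j) (H2 j (Finset.mem_filter.1 hj).2)
  -- vanishing outside RJT
  have hvanish : ∀ (z : Fin n → Fin m → Fin T → ℝ),
      (∀ i j t, z i j t ≠ 0 → v i j = 1) →
      ∀ q : Fin m × Fin T, q ∉ RJT →
        ∑ i ∈ univ.filter (fun i => (i, q.2) ∈ A), z i q.1 q.2 = 0 := by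
    intro z hzsupp q hq
    apply Finset.sum_eq_zero
    intro i hi
    by_contra hne
    have hv' : v i q.1 = 1 := hzsupp _ _ _ hne
    exact hq (Finset.mem_filter.2 ⟨Finset.mem_univ _,
      Or.inl ⟨i, hv', (Finset.mem_filter.1 hi).2⟩⟩)
  -- x side
  have hSSx : ∑ p ∈ A, ∑ j, x p.1 j p.2
      = (∑ j ∈ RJ, s j) + ∑ q ∈ RJT.filter (fun q => q.1 ∉ RJ), st q.1 q.2 := by
    rw [SS_eq]
    have e1 : ∑ q : Fin m × Fin T, ∑ i ∈ univ.filter (fun i => (i, q.2) ∈ A), x i q.1 q.2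
        = ∑ q ∈ RJT, ∑ i ∈ univ.filter (fun i => (i, q.2) ∈ A), x i q.1 q.2 :=
      (Finset.sum_subset (Finset.subset_univ RJT)
        (fun q _ hq => hvanish x hsupp q hq)).symm
    rw [e1]
    have e2 : ∀ q ∈ RJT, ∑ i ∈ univ.filter (fun i => (i, q.2) ∈ A), x i q.1 q.2
        = ∑ i, x i q.1 q.2 := by
      intro q hq
      exact Finset.sum_subset (Finset.filter_subset _ _)
        (fun i _ hi => f3 q hq i (by simpa using hi))
    rw [Finset.sum_congr rfl e2]
    rw [← Finset.sum_filter_add_sum_filter_not RJT (fun q => q.1 ∈ RJ)]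
    congr 1
    · -- part over RJ
      have e3 : RJT.filter (fun q => q.1 ∈ RJ)
          = univ.filter (fun q : Fin m × Fin T => Qp q ∧ q.1 ∈ RJ) := by
        rw [hRJT, Finset.filter_filter]
      rw [e3, sum_filter_fst (fun j => j ∈ RJ) Qp (fun q => ∑ i, x i q.1 q.2)]
      have e4 : ∀ j ∈ univ.filter (fun j => j ∈ RJ),
          ∑ t ∈ univ.filter (fun t => Qp (j, t)), ∑ i, x i j t = s j := by
        intro j hj
        have hjRJ : j ∈ RJ := (Finset.mem_filter.1 hj).2
        have e5 : ∑ t ∈ univ.filter (fun t => Qp (j, t)), ∑ i, x i j t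
            = ∑ t, ∑ i, x i j t := by
          apply Finset.sum_subset (Finset.filter_subset _ _)
          intro t _ ht
          apply f4 j hjRJ t
          intro hmem
          exact ht (Finset.mem_filter.2 ⟨Finset.mem_univ _, (Finset.mem_filter.1 hmem).2⟩)
        rw [e5]
        exact f1 j hjRJ
      rw [Finset.sum_congr rfl e4]
      have : univ.filter (fun j => j ∈ RJ) = RJ := by
        ext j; simp
      rw [this]
    · -- part outside RJ
      apply Finset.sum_congr rfl
      intro q hq
      have hq1 : q ∈ RJT := Finset.mem_of_mem_filter _ hq
      have hq2 : q.1 ∉ RJ := by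
        have := (Finset.mem_filter.1 hq).2
        simpa using this
      exact f5 q hq1 hq2
  -- y side
  have hSSy : ∑ p ∈ A, ∑ j, y p.1 j p.2
      ≤ (∑ j ∈ RJ, s j) + ∑ q ∈ RJT.filter (fun q => q.1 ∉ RJ), st q.1 q.2 := by
    rw [SS_eq]
    have e1 : ∑ q : Fin m × Fin T, ∑ i ∈ univ.filter (fun i => (i, q.2) ∈ A), y i q.1 q.2
        = ∑ q ∈ RJT, ∑ i ∈ univ.filter (fun i => (i, q.2) ∈ A), y i q.1 q.2 :=
      (Finset.sum_subset (Finset.subset_univ RJT)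
        (fun q _ hq => hvanish y hysupp q hq)).symm
    rw [e1]
    have e2 : ∑ q ∈ RJT, ∑ i ∈ univ.filter (fun i => (i, q.2) ∈ A), y i q.1 q.2
        ≤ ∑ q ∈ RJT, ∑ i, y i q.1 q.2 := by
      apply Finset.sum_le_sum
      intro q _
      exact Finset.sum_le_sum_of_subset_of_nonneg (Finset.filter_subset _ _)
        (fun i _ _ => hy0 i q.1 q.2)
    refine le_trans e2 ?_
    rw [← Finset.sum_filter_add_sum_filter_not RJT (fun q => q.1 ∈ RJ)]
    apply add_le_add
    · -- part over RJ
      have e3 : ∑ q ∈ RJT.filter (fun q => q.1 ∈ RJ), ∑ i, y i q.1 q.2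
          ≤ ∑ q ∈ univ.filter (fun q : Fin m × Fin T => True ∧ q.1 ∈ RJ), ∑ i, y i q.1 q.2 := by
        apply Finset.sum_le_sum_of_subset_of_nonneg
        · intro q hq
          refine Finset.mem_filter.2 ⟨Finset.mem_univ _, trivial, ?_⟩
          have := (Finset.mem_filter.1 hq).2
          simpa using this
        · intro q _ _
          exact Finset.sum_nonneg fun i _ => hy0 i q.1 q.2
      refine le_trans e3 ?_
      rw [sum_filter_fst (fun j => j ∈ RJ) (fun _ => True) (fun q => ∑ i, y i q.1 q.2)]
      have e4 : ∀ j ∈ univ.filter (fun j => j ∈ RJ),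
          ∑ t ∈ univ.filter (fun _ : Fin T => True), ∑ i, y i j t ≤ s j := by
        intro j _
        have : univ.filter (fun _ : Fin T => True) = univ := by simp
        rw [this]
        exact hys j
      have : univ.filter (fun j => j ∈ RJ) = RJ := by ext j; simp
      rw [this] at e4 ⊢
      exact Finset.sum_le_sum e4
    · apply Finset.sum_le_sum
      intro q _
      exact hyst q.1 q.2
  rw [hSSx]
  exact hSSy




variable {N : ℕ}

/-- number of entries `≤ γ` -/
noncomputable def cnt (u : Fin N → ℝ) (γ : ℝ) : ℕ :=
  (univ.filter fun k => u k ≤ γ).card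

lemma cnt_le (u : Fin N → ℝ) (γ : ℝ) : cnt u γ ≤ N := by
  classical
  refine le_trans (Finset.card_filter_le _ _) ?_
  simp

lemma monotone_sortedVal (u : Fin N → ℝ) : Monotone (sortedVal u) :=
  Tuple.monotone_sort u

lemma cnt_sorted (u : Fin N → ℝ) (γ : ℝ) :
    (univ.filter fun i => sortedVal u i ≤ γ).card = cnt u γ := by
  classical
  unfold cnt sortedVal
  apply Finset.card_bij' (fun i _ => Tuple.sort u i) (fun k _ => (Tuple.sort u).symm k)
  · intro i hi
    simp only [Finset.mem_filter, Finset.mem_univ, true_and] at hi ⊢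
    exact hi
  · intro k hk
    simp only [Finset.mem_filter, Finset.mem_univ, true_and] at hk ⊢
    rw [Equiv.apply_symm_apply]
    exact hk
  · intro i _; exact Equiv.symm_apply_apply _ _
  · intro k _; exact Equiv.apply_symm_apply _ _

lemma sorted_le_iff (u : Fin N → ℝ) (γ : ℝ) (i : Fin N) :
    sortedVal u i ≤ γ ↔ (i : ℕ) < cnt u γ := by
  classical
  set F := univ.filter fun k : Fin N => sortedVal u k ≤ γ with hF
  have hcard : F.card = cnt u γ := cnt_sorted u γ
  constructor
  · intro h
    have hsub : Finset.Iic i ⊆ F := by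
      intro k hk
      simp only [Finset.mem_Iic] at hk
      exact Finset.mem_filter.2 ⟨Finset.mem_univ _,
        le_trans (monotone_sortedVal u hk) h⟩
    have := Finset.card_le_card hsub
    rw [Fin.card_Iic, hcard] at this
    omega
  · intro h
    have hne : F.Nonempty := by
      rw [← Finset.card_pos, hcard]; omega
    set M := F.max' hne with hM
    have hMmem : M ∈ F := F.max'_mem hne
    have hsub : F ⊆ Finset.Iic M := fun k hk => Finset.mem_Iic.2 (F.le_max' k hk)
    have hle := Finset.card_le_card hsub
    rw [Fin.card_Iic, hcard] at hle
    have hiM : i ≤ M := by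
      have : (i:ℕ) ≤ (M:ℕ) := by omega
      exact Fin.le_def.2 this
    exact le_trans (monotone_sortedVal u hiM) (Finset.mem_filter.1 hMmem).2

/-- the abstract counting criterion for leximin improvement -/
lemma lexGt_of_cnt (u u' : Fin N → ℝ) (a : Fin N)
    (hA : ∀ γ, γ < u a → cnt u γ ≤ cnt u' γ)
    (hB : ∀ γ, γ ≤ u a → cnt u' γ ≤ cnt u γ)
    (hC : cnt u' (u a) < cnt u (u a)) : LexGt u' u := by
  classical
  have hk0N : cnt u' (u a) < N := lt_of_lt_of_le hC (cnt_le u (u a))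
  set k₀ : Fin N := ⟨cnt u' (u a), hk0N⟩ with hk₀
  refine ⟨k₀, ?_, ?_⟩
  · intro i hi
    have hik : (i : ℕ) < cnt u' (u a) := hi
    have hfi : sortedVal u' i ≤ u a := (sorted_le_iff u' (u a) i).2 hik
    have hgi : sortedVal u i ≤ u a := (sorted_le_iff u (u a) i).2 (lt_trans hik hC)
    -- first: sortedVal u' i ≤ sortedVal u i
    have h1 : sortedVal u' i ≤ sortedVal u i := by
      rcases lt_or_eq_of_le hgi with h | h
      · have := hA (sortedVal u i) h
        have h2 : (i:ℕ) < cnt u (sortedVal u i) :=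
          (sorted_le_iff u _ i).1 le_rfl
        exact (sorted_le_iff u' _ i).2 (lt_of_lt_of_le h2 this)
      · rw [h]; exact hfi
    -- second: sortedVal u i ≤ sortedVal u' i
    have h2 : sortedVal u i ≤ sortedVal u' i := by
      have h3 : (i:ℕ) < cnt u' (sortedVal u' i) := (sorted_le_iff u' _ i).1 le_rfl
      have h4 := hB (sortedVal u' i) (le_trans h1 hgi)
      exact (sorted_le_iff u _ i).2 (lt_of_lt_of_le h3 h4)
    exact le_antisymm h1 h2
  · have hg : sortedVal u k₀ ≤ u a := (sorted_le_iff u (u a) k₀).2 hC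
    have hf : ¬ sortedVal u' k₀ ≤ u a := by
      intro hcon
      have := (sorted_le_iff u' (u a) k₀).1 hcon
      simp [hk₀] at this
    exact lt_of_le_of_lt hg (lt_of_not_ge hf)

lemma lexGt_two_bump (u : Fin N → ℝ) (a b : Fin N) (ε : ℝ) (hε : 0 < ε)
    (hab : u a + ε ≤ u b - ε) :
    LexGt (fun p => u p + (if p = a then ε else 0) - (if p = b then ε else 0)) u := by
  classical
  set u' : Fin N → ℝ := fun p => u p + (if p = a then ε else 0) - (if p = b then ε else 0)
    with hu'
  have hne : a ≠ b := by
    intro h; rw [h] at hab; linarith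
  have hva : u' a = u a + ε := by simp [hu', hne]
  have hvb : u' b = u b - ε := by simp [hu', Ne.symm hne]
  have hvo : ∀ p, p ≠ a → p ≠ b → u' p = u p := by
    intro p h1 h2; simp [hu', h1, h2]
  apply lexGt_of_cnt u u' a
  · intro γ hγ
    unfold cnt
    apply Finset.card_le_card
    intro p hp
    have hp2 : u p ≤ γ := (Finset.mem_filter.1 hp).2
    refine Finset.mem_filter.2 ⟨Finset.mem_univ _, ?_⟩
    by_cases h1 : p = a
    · rw [h1] at hp2; linarith
    · by_cases h2 : p = b
      · rw [h2] at hp2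
        linarith
      · rw [hvo p h1 h2]; exact hp2
  · intro γ hγ
    unfold cnt
    apply Finset.card_le_card
    intro p hp
    have hp2 : u' p ≤ γ := (Finset.mem_filter.1 hp).2
    refine Finset.mem_filter.2 ⟨Finset.mem_univ _, ?_⟩
    by_cases h1 : p = a
    · rw [h1, hva] at hp2; rw [h1]; linarith
    · by_cases h2 : p = b
      · rw [h2, hvb] at hp2; rw [h2]; linarith
      · rw [hvo p h1 h2] at hp2; exact hp2
  · unfold cnt
    have hsub : (univ.filter fun k => u' k ≤ u a) ⊆ (univ.filter fun k => u k ≤ u a) := by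
      intro p hp
      have hp2 : u' p ≤ u a := (Finset.mem_filter.1 hp).2
      refine Finset.mem_filter.2 ⟨Finset.mem_univ _, ?_⟩
      by_cases h1 : p = a
      · subst h1; linarith [hva, hp2]
      · by_cases h2 : p = b
        · rw [h2, hvb] at hp2; rw [h2]; linarith
        · rw [hvo p h1 h2] at hp2; exact hp2
    apply Finset.card_lt_card
    refine (Finset.ssubset_iff_of_subset hsub).2 ⟨a,
      Finset.mem_filter.2 ⟨Finset.mem_univ _, le_rfl⟩, ?_⟩
    intro hcon
    have := (Finset.mem_filter.1 hcon).2
    rw [hva] at this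
    linarith

lemma lexGt_one_bump (u : Fin N → ℝ) (a : Fin N) (ε : ℝ) (hε : 0 < ε) :
    LexGt (fun p => u p + (if p = a then ε else 0)) u := by
  classical
  set u' : Fin N → ℝ := fun p => u p + (if p = a then ε else 0) with hu'
  have hva : u' a = u a + ε := by simp [hu']
  have hvo : ∀ p, p ≠ a → u' p = u p := by intro p h1; simp [hu', h1]
  apply lexGt_of_cnt u u' a
  · intro γ hγ
    apply Finset.card_le_card
    intro p hp
    have hp2 : u p ≤ γ := (Finset.mem_filter.1 hp).2
    refine Finset.mem_filter.2 ⟨Finset.mem_univ _, ?_⟩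
    by_cases h1 : p = a
    · rw [h1] at hp2; linarith
    · rw [hvo p h1]; exact hp2
  · intro γ hγ
    apply Finset.card_le_card
    intro p hp
    have hp2 : u' p ≤ γ := (Finset.mem_filter.1 hp).2
    refine Finset.mem_filter.2 ⟨Finset.mem_univ _, ?_⟩
    by_cases h1 : p = a
    · rw [h1, hva] at hp2; rw [h1]; linarith
    · rw [hvo p h1] at hp2; exact hp2
  · have hsub : (univ.filter fun k => u' k ≤ u a) ⊆ (univ.filter fun k => u k ≤ u a) := by
      intro p hp
      have hp2 : u' p ≤ u a := (Finset.mem_filter.1 hp).2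
      refine Finset.mem_filter.2 ⟨Finset.mem_univ _, ?_⟩
      by_cases h1 : p = a
      · subst h1; linarith [hva, hp2]
      · rw [hvo p h1] at hp2; exact hp2
    apply Finset.card_lt_card
    refine (Finset.ssubset_iff_of_subset hsub).2 ⟨a,
      Finset.mem_filter.2 ⟨Finset.mem_univ _, le_rfl⟩, ?_⟩
    intro hcon
    have := (Finset.mem_filter.1 hcon).2
    rw [hva] at this
    linarith

lemma strictmono_nat_of_fin {p : ℕ} (φ : Fin p → ℕ) (h : StrictMono φ) (k : Fin p) :
    (k : ℕ) ≤ φ k := by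
  suffices H : ∀ (j : ℕ) (k : Fin p), (k : ℕ) = j → j ≤ φ k by
    exact H (k : ℕ) k rfl
  intro j
  induction j with
  | zero => intro k _; exact Nat.zero_le _
  | succ j IH =>
      intro k hk
      have hj : j < p := by omega
      set k' : Fin p := ⟨j, hj⟩ with hk'
      have hlt : k' < k := by
        rw [Fin.lt_def]; simp [hk']; omega
      have h1 : φ k' < φ k := h hlt
      have h2 : j ≤ φ k' := IH k' rfl
      omega

lemma sum_smallest_le (h : Fin N → ℝ) (hm : Monotone h) (I : Finset (Fin N)) :
    ∑ i ∈ univ.filter (fun i : Fin N => (i : ℕ) < I.card), h i ≤ ∑ i ∈ I, h i := by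
  classical
  set p := I.card with hp
  have hpN : p ≤ N := by
    rw [hp]
    refine le_trans (Finset.card_le_card (Finset.subset_univ I)) ?_
    simp
  set f := I.orderEmbOfFin (rfl : I.card = p) with hf
  have hrange : ∀ k : Fin p, f k ∈ I := by
    intro k
    have := Finset.range_orderEmbOfFin I (rfl : I.card = p)
    have h2 : f k ∈ Set.range f := Set.mem_range_self k
    rw [this] at h2
    exact h2
  have hsumI : ∑ i ∈ I, h i = ∑ k : Fin p, h (f k) := by
    apply (Finset.sum_nbij (fun k => f k) ?_ ?_ ?_ ?_).symm
    · intro k _; exact hrange k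
    · intro k1 _ k2 _ he; exact f.injective he
    · intro i hi
      have := Finset.range_orderEmbOfFin I (rfl : I.card = p)
      have h2 : i ∈ Set.range f := by rw [this]; exact hi
      obtain ⟨k, hk⟩ := h2
      exact ⟨k, by simp, hk⟩
    · intro k _; rfl
  have hsumF : ∑ i ∈ univ.filter (fun i : Fin N => (i : ℕ) < p), h i
      = ∑ k : Fin p, h (Fin.castLE hpN k) := by
    apply (Finset.sum_nbij (fun k => Fin.castLE hpN k) ?_ ?_ ?_ ?_).symm
    · intro k _
      refine Finset.mem_filter.2 ⟨Finset.mem_univ _, ?_⟩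
      simpa using k.2
    · intro k1 _ k2 _ he
      exact Fin.castLE_injective hpN he
    · intro i hi
      have h2 : (i : ℕ) < p := (Finset.mem_filter.1 hi).2
      exact ⟨⟨i, h2⟩, by simp, by simp [Fin.castLE]⟩
    · intro k _; rfl
  rw [hsumI, hsumF]
  apply Finset.sum_le_sum
  intro k _
  apply hm
  have hsm : StrictMono (fun k : Fin p => ((f k : Fin N) : ℕ)) := by
    intro k1 k2 hlt
    exact f.strictMono hlt
  have := strictmono_nat_of_fin _ hsm k
  exact Fin.le_def.2 (by simpa [Fin.castLE] using this)

lemma lexGt_exists_threshold (u w : Fin N → ℝ) (h : LexGt w u) :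
    ∃ c : ℝ, ∑ k ∈ univ.filter (fun k => u k ≤ c), u k
      < ∑ k ∈ univ.filter (fun k => u k ≤ c), w k := by
  classical
  obtain ⟨ks, hpre, hlt⟩ := h
  set c := sortedVal u ks with hc
  refine ⟨c, ?_⟩
  set K := univ.filter (fun k => u k ≤ c) with hK
  set p := cnt u c with hp
  have hKcard : K.card = p := rfl
  have hksp : (ks : ℕ) < p := (sorted_le_iff u c ks).1 le_rfl
  set Ip := univ.filter (fun i : Fin N => (i : ℕ) < p) with hIp
  -- sum over K of u equals sum over Ip of sortedVal u
  have S1 : ∑ k ∈ K, u k = ∑ i ∈ Ip, sortedVal u i := by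
    have e1 : ∑ i ∈ univ.filter (fun i => sortedVal u i ≤ c), sortedVal u i
        = ∑ k ∈ K, u k := by
      apply Finset.sum_nbij' (fun i => Tuple.sort u i) (fun k => (Tuple.sort u).symm k)
      · intro i hi
        exact Finset.mem_filter.2 ⟨Finset.mem_univ _, (Finset.mem_filter.1 hi).2⟩
      · intro k hk
        refine Finset.mem_filter.2 ⟨Finset.mem_univ _, ?_⟩
        unfold sortedVal
        rw [Equiv.apply_symm_apply]
        exact (Finset.mem_filter.1 hk).2
      · intro i _; exact Equiv.symm_apply_apply _ _
      · intro k _; exact Equiv.apply_symm_apply _ _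
      · intro i _; rfl
    have e2 : univ.filter (fun i => sortedVal u i ≤ c) = Ip := by
      apply Finset.filter_congr
      intro i _
      exact sorted_le_iff u c i
    rw [← e1, e2]
  -- sum over K of w is at least sum over Ip of sortedVal w
  have S3 : ∑ i ∈ Ip, sortedVal w i ≤ ∑ k ∈ K, w k := by
    set I := univ.filter (fun i : Fin N => Tuple.sort w i ∈ K) with hI
    have ecard : I.card = K.card := by
      apply Finset.card_bij' (fun i _ => Tuple.sort w i) (fun k _ => (Tuple.sort w).symm k)
      · intro i hi; exact (Finset.mem_filter.1 hi).2
      · intro k hk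
        refine Finset.mem_filter.2 ⟨Finset.mem_univ _, ?_⟩
        rw [Equiv.apply_symm_apply]; exact hk
      · intro i _; exact Equiv.symm_apply_apply _ _
      · intro k _; exact Equiv.apply_symm_apply _ _
    have e3 : ∑ k ∈ K, w k = ∑ i ∈ I, sortedVal w i := by
      apply Finset.sum_nbij' (fun k => (Tuple.sort w).symm k) (fun i => Tuple.sort w i)
      · intro k hk
        refine Finset.mem_filter.2 ⟨Finset.mem_univ _, ?_⟩
        rw [Equiv.apply_symm_apply]
        exact hk
      · intro i hi; exact (Finset.mem_filter.1 hi).2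
      · intro k _; exact Equiv.apply_symm_apply _ _
      · intro i _; exact Equiv.symm_apply_apply _ _
      · intro k hk
        unfold sortedVal
        rw [Equiv.apply_symm_apply]
    rw [e3]
    have := sum_smallest_le (sortedVal w) (monotone_sortedVal w) I
    rw [ecard, hKcard] at this
    exact this
  -- strict comparison on Ip
  have S2 : ∑ i ∈ Ip, sortedVal u i < ∑ i ∈ Ip, sortedVal w i := by
    apply Finset.sum_lt_sum
    · intro i hi
      have hip : (i : ℕ) < p := (Finset.mem_filter.1 hi).2
      rcases lt_trichotomy i ks with hik | hik | hik
      · exact (hpre i hik).symm.le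
      · rw [hik]; exact hlt.le
      · have h1 : sortedVal u i ≤ c := (sorted_le_iff u c i).2 hip
        have h2 : sortedVal w ks ≤ sortedVal w i := monotone_sortedVal w hik.le
        linarith
    · refine ⟨ks, Finset.mem_filter.2 ⟨Finset.mem_univ _, hksp⟩, ?_⟩
      exact hlt
  rw [S1]
  exact lt_of_lt_of_le S2 S3

section Ratio
variable {ι : Type*} [Fintype ι]

lemma ratio_sum_le_aux : ∀ (k : ℕ) (u w : ι → ℝ), (univ.image u).card ≤ k →
    (∀ p, 0 < u p) →
    (∀ c, ∑ p ∈ univ.filter (fun p => u p ≤ c), w p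
      ≤ ∑ p ∈ univ.filter (fun p => u p ≤ c), u p) →
    ∑ p, w p / u p ≤ (Fintype.card ι : ℝ) := by
  classical
  intro k
  induction k with
  | zero =>
      intro u w hcard _ _
      have himg : (univ.image u) = ∅ := Finset.card_eq_zero.1 (le_antisymm hcard (Nat.zero_le _))
      have huniv : (univ : Finset ι) = ∅ := Finset.image_eq_empty.1 himg
      rw [huniv]
      simp [Fintype.card, huniv]
  | succ k IH =>
      intro u w hcard hu hstar
      by_cases hk : (univ.image u).card ≤ k
      · exact IH u w hk hu hstar
      have hcard1 : (univ.image u).card = k + 1 := le_antisymm hcard (by omega)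
      have hne : (univ.image u).Nonempty := by
        rw [← Finset.card_pos, hcard1]; omega
      have hιne : (univ : Finset ι).Nonempty := by
        obtain ⟨val, hval⟩ := hne
        obtain ⟨p, hp, _⟩ := Finset.mem_image.1 hval
        exact ⟨p, hp⟩
      set c₁ := (univ.image u).min' hne with hc₁
      have hc₁mem : c₁ ∈ univ.image u := (univ.image u).min'_mem hne
      obtain ⟨p₁, _, hp₁⟩ := Finset.mem_image.1 hc₁mem
      have hc₁pos : 0 < c₁ := hp₁ ▸ hu p₁
      have hlow : ∀ p, c₁ ≤ u p := fun p =>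
        Finset.min'_le _ _ (Finset.mem_image_of_mem u (Finset.mem_univ p))
      by_cases hone : (univ.image u).card = 1
      · -- all values equal c₁
        obtain ⟨aa, ha2⟩ := Finset.card_eq_one.1 hone
        have hval : ∀ p, u p = c₁ := by
          intro p
          have h1 : u p ∈ univ.image u := Finset.mem_image_of_mem u (Finset.mem_univ p)
          have h2 : c₁ ∈ univ.image u := hc₁mem
          rw [ha2] at h1 h2
          rw [Finset.mem_singleton] at h1 h2
          rw [h1, h2]
        have hfull : univ.filter (fun p => u p ≤ c₁) = univ := by
          apply Finset.filter_true_of_mem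
          intro p _
          exact (hval p).le
        have hstar1 := hstar c₁
        rw [hfull] at hstar1
        have e1 : ∑ p, w p / u p = (∑ p, w p) / c₁ := by
          rw [Finset.sum_div]
          exact Finset.sum_congr rfl fun p _ => by rw [hval p]
        rw [e1]
        have e2 : (∑ p : ι, u p) = (Fintype.card ι : ℝ) * c₁ := by
          rw [Finset.sum_congr rfl fun p _ => hval p]
          simp [Finset.card_univ, mul_comm]
        rw [div_le_iff₀ hc₁pos]
        calc (∑ p : ι, w p) ≤ ∑ p : ι, u p := hstar1
          _ = (Fintype.card ι : ℝ) * c₁ := e2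
      · -- at least two values
        have h2card : 1 ≤ ((univ.image u).erase c₁).card := by
          rw [Finset.card_erase_of_mem hc₁mem]
          omega
        have hne2 : ((univ.image u).erase c₁).Nonempty := by
          rw [← Finset.card_pos]; omega
        set c₂ := ((univ.image u).erase c₁).min' hne2 with hc₂
        have hc₂mem : c₂ ∈ (univ.image u).erase c₁ := Finset.min'_mem _ _
        have hc₂img : c₂ ∈ univ.image u := Finset.mem_of_mem_erase hc₂mem
        have hc₂ne : c₂ ≠ c₁ := Finset.ne_of_mem_erase hc₂mem
        have hc12 : c₁ < c₂ := lt_of_le_of_ne (Finset.min'_le _ _ hc₂img) (Ne.symm hc₂ne)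
        have hlow2 : ∀ p, u p ≠ c₁ → c₂ ≤ u p := by
          intro p hne'
          apply Finset.min'_le
          exact Finset.mem_erase.2 ⟨hne', Finset.mem_image_of_mem u (Finset.mem_univ p)⟩
        set u' : ι → ℝ := fun p => if u p = c₁ then c₂ else u p with hu'
        set w' : ι → ℝ := fun p => if u p = c₁ then w p + (c₂ - c₁) else w p with hw'
        -- image of u' is contained in erase
        have himg' : univ.image u' ⊆ (univ.image u).erase c₁ := by
          intro val hval
          obtain ⟨p, _, hp⟩ := Finset.mem_image.1 hval
          by_cases h : u p = c₁
          · have : val = c₂ := by rw [← hp]; simp [hu', h]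
            rw [this]; exact hc₂mem
          · have : val = u p := by rw [← hp]; simp [hu', h]
            rw [this]
            exact Finset.mem_erase.2 ⟨h, Finset.mem_image_of_mem u (Finset.mem_univ p)⟩
        have hcard' : (univ.image u').card ≤ k := by
          refine le_trans (Finset.card_le_card himg') ?_
          rw [Finset.card_erase_of_mem hc₁mem, hcard1]
          omega
        have hu'pos : ∀ p, 0 < u' p := by
          intro p
          by_cases h : u p = c₁ <;> simp [hu', h]
          · linarith
          · exact hu p
        have hstar' : ∀ c, ∑ p ∈ univ.filter (fun p => u' p ≤ c), w' p
            ≤ ∑ p ∈ univ.filter (fun p => u' p ≤ c), u' p := by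
          intro c
          by_cases hc : c₂ ≤ c
          · have hfeq : univ.filter (fun p => u' p ≤ c) = univ.filter (fun p => u p ≤ c) := by
              apply Finset.filter_congr
              intro p _
              by_cases h : u p = c₁
              · simp only [hu', h, if_true]
                constructor
                · intro _; linarith
                · intro _; exact hc
              · simp [hu', h]
            rw [hfeq]
            have hdiff : ∑ p ∈ univ.filter (fun p => u p ≤ c), (w' p - w p)
                = ∑ p ∈ univ.filter (fun p => u p ≤ c), (u' p - u p) := by
              apply Finset.sum_congr rfl
              intro p _
              by_cases h : u p = c₁ <;> simp [hu', hw', h]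
            have h1 := hstar c
            rw [Finset.sum_sub_distrib, Finset.sum_sub_distrib] at hdiff
            linarith
          · have hempty : univ.filter (fun p => u' p ≤ c) = ∅ := by
              apply Finset.filter_false_of_mem
              intro p _
              push_neg at hc
              by_cases h : u p = c₁
              · simp only [hu', h, if_true]; linarith
              · simp only [hu', h, if_false]
                have := hlow2 p h
                linarith
            rw [hempty]
            simp
        have hIH := IH u' w' hcard' hu'pos hstar'
        -- compare the two ratio sums
        set B := univ.filter (fun p => u p = c₁) with hB
        have hBfilter : univ.filter (fun p => u p ≤ c₁) = B := by
          apply Finset.filter_congr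
          intro p _
          constructor
          · intro h; exact le_antisymm h (hlow p)
          · intro h; exact h.le
        have hstarB := hstar c₁
        rw [hBfilter] at hstarB
        have hsumBu : ∑ p ∈ B, u p = (B.card : ℝ) * c₁ := by
          rw [Finset.sum_congr rfl (fun p hp => (Finset.mem_filter.1 hp).2)]
          simp [mul_comm]
          exact Or.inl rfl
        have hdecomp : ∑ p, w p / u p
            = ∑ p, w' p / u' p + ((1/c₁ - 1/c₂) * (∑ p ∈ B, w p)
                - (B.card : ℝ) * ((c₂ - c₁)/c₂)) := by
          have h01 : c₁ ≠ 0 := ne_of_gt hc₁pos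
          have h02 : c₂ ≠ 0 := ne_of_gt (lt_trans hc₁pos hc12)
          have e1 : ∀ p, w p / u p - w' p / u' p
              = if u p = c₁ then w p * (1/c₁ - 1/c₂) - (c₂ - c₁)/c₂ else 0 := by
            intro p
            by_cases h : u p = c₁
            · simp only [hu', hw', h, if_true]
              field_simp
              ring
            · simp [hu', hw', h]
          have e2 : ∑ p, (w p / u p - w' p / u' p)
              = ∑ p ∈ B, (w p * (1/c₁ - 1/c₂) - (c₂ - c₁)/c₂) := by
            rw [Finset.sum_congr rfl (fun p _ => e1 p), ← Finset.sum_filter]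
          rw [Finset.sum_sub_distrib] at e2
          rw [Finset.sum_sub_distrib, ← Finset.sum_mul, Finset.sum_const,
            nsmul_eq_mul] at e2
          have : (∑ p ∈ B, w p) * (1/c₁ - 1/c₂) = (1/c₁ - 1/c₂) * (∑ p ∈ B, w p) := by ring
          linarith [e2]
        rw [hdecomp]
        have hcoef : 0 ≤ 1/c₁ - 1/c₂ := by
          have h1 : 1/c₂ ≤ 1/c₁ := by
            apply one_div_le_one_div_of_le hc₁pos hc12.le
          linarith
        have hkey : (1/c₁ - 1/c₂) * (∑ p ∈ B, w p) - (B.card : ℝ) * ((c₂ - c₁)/c₂) ≤ 0 := by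
          have h1 : (1/c₁ - 1/c₂) * (∑ p ∈ B, w p) ≤ (1/c₁ - 1/c₂) * ((B.card : ℝ) * c₁) := by
            apply mul_le_mul_of_nonneg_left _ hcoef
            rw [← hsumBu]
            exact hstarB
          have h01 : c₁ ≠ 0 := ne_of_gt hc₁pos
          have h02 : c₂ ≠ 0 := ne_of_gt (lt_trans hc₁pos hc12)
          have h2 : (1/c₁ - 1/c₂) * ((B.card : ℝ) * c₁) = (B.card : ℝ) * ((c₂ - c₁)/c₂) := by
            field_simp
          linarith
        linarith

lemma ratio_sum_le (u w : ι → ℝ) (hu : ∀ p, 0 < u p)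
    (hstar : ∀ c, ∑ p ∈ univ.filter (fun p => u p ≤ c), w p
      ≤ ∑ p ∈ univ.filter (fun p => u p ≤ c), u p) :
    ∑ p, w p / u p ≤ (Fintype.card ι : ℝ) := by
  classical
  exact ratio_sum_le_aux (univ.image u).card u w le_rfl hu hstar

lemma prod_le_of_ratio (u w : ι → ℝ) (hu : ∀ p, 0 < u p) (hw : ∀ p, 0 < w p)
    (h : ∑ p, w p / u p ≤ (Fintype.card ι : ℝ)) :
    ∏ p, w p ≤ ∏ p, u p := by
  classical
  have h1 : ∀ p : ι, w p / u p ≤ Real.exp (w p / u p - 1) := by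
    intro p
    have := Real.add_one_le_exp (w p / u p - 1)
    linarith
  have h2 : ∏ p, (w p / u p) ≤ ∏ p, Real.exp (w p / u p - 1) := by
    apply Finset.prod_le_prod
    · intro p _; exact le_of_lt (div_pos (hw p) (hu p))
    · intro p _; exact h1 p
  rw [← Real.exp_sum] at h2
  have h3 : (∑ p, (w p / u p - 1)) ≤ 0 := by
    rw [Finset.sum_sub_distrib]
    simp only [Finset.sum_const, Finset.card_univ, nsmul_eq_mul, mul_one]
    linarith
  have h4 : Real.exp (∑ p, (w p / u p - 1)) ≤ 1 := Real.exp_le_one_iff.2 h3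
  have h5 : ∏ p, (w p / u p) ≤ 1 := le_trans h2 h4
  rw [Finset.prod_div_distrib] at h5
  have hupos : (0:ℝ) < ∏ p, u p := Finset.prod_pos fun p _ => hu p
  rw [div_le_one hupos] at h5
  exact h5

lemma prod_two_bump_gt [DecidableEq ι] (u : ι → ℝ) (hu : ∀ p, 0 < u p) (a b : ι)
    (hab : a ≠ b) (ε : ℝ) (hε : 0 < ε) (hεlt : ε < u b - u a) :
    ∏ p, u p < ∏ p, (u p + (if p = a then ε else 0) - (if p = b then ε else 0)) := by
  classical
  set F : ι → ℝ := fun p => u p + (if p = a then ε else 0) - (if p = b then ε else 0) with hF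
  have hFa : F a = u a + ε := by simp [hF, hab]
  have hFb : F b = u b - ε := by simp [hF, Ne.symm hab]
  have hFo : ∀ p, p ≠ a → p ≠ b → F p = u p := by intro p h1 h2; simp [hF, h1, h2]
  have hbmem : b ∈ (univ : Finset ι).erase a := Finset.mem_erase.2 ⟨Ne.symm hab, Finset.mem_univ _⟩
  have hsplit : ∀ G : ι → ℝ, ∏ p, G p = G a * (G b * ∏ p ∈ ((univ : Finset ι).erase a).erase b, G p) := by
    intro G
    rw [Finset.mul_prod_erase _ G hbmem, Finset.mul_prod_erase _ G (Finset.mem_univ a)]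
  rw [hsplit u, hsplit F, hFa, hFb]
  have hrest : ∏ p ∈ ((univ : Finset ι).erase a).erase b, F p
      = ∏ p ∈ ((univ : Finset ι).erase a).erase b, u p := by
    apply Finset.prod_congr rfl
    intro p hp
    have h2 : p ≠ b := Finset.ne_of_mem_erase hp
    have h1 : p ≠ a := Finset.ne_of_mem_erase (Finset.mem_of_mem_erase hp)
    exact hFo p h1 h2
  rw [hrest]
  have hrestpos : 0 < ∏ p ∈ ((univ : Finset ι).erase a).erase b, u p :=
    Finset.prod_pos fun p _ => hu p
  rw [← mul_assoc, ← mul_assoc]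
  apply mul_lt_mul_of_pos_right _ hrestpos
  have hua := hu a
  have hub := hu b
  nlinarith

lemma prod_one_bump_gt [DecidableEq ι] (u : ι → ℝ) (hu : ∀ p, 0 < u p) (a : ι)
    (ε : ℝ) (hε : 0 < ε) :
    ∏ p, u p < ∏ p, (u p + (if p = a then ε else 0)) := by
  classical
  set F : ι → ℝ := fun p => u p + (if p = a then ε else 0) with hF
  have hFa : F a = u a + ε := by simp [hF]
  have hFo : ∀ p, p ≠ a → F p = u p := by intro p h1; simp [hF, h1]
  have hsplit : ∀ G : ι → ℝ, ∏ p, G p = G a * ∏ p ∈ (univ : Finset ι).erase a, G p := by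
    intro G
    rw [Finset.mul_prod_erase _ G (Finset.mem_univ a)]
  rw [hsplit u, hsplit F, hFa]
  have hrest : ∏ p ∈ (univ : Finset ι).erase a, F p
      = ∏ p ∈ (univ : Finset ι).erase a, u p := by
    apply Finset.prod_congr rfl
    intro p hp
    exact hFo p (Finset.ne_of_mem_erase hp)
  rw [hrest]
  have hrestpos : 0 < ∏ p ∈ (univ : Finset ι).erase a, u p :=
    Finset.prod_pos fun p _ => hu p
  apply mul_lt_mul_of_pos_right _ hrestpos
  linarith [hu a]

end Ratio



section Assemble

variable {n m T : ℕ} (v : Fin n → Fin m → ℝ) (d : Fin n → Fin T → ℝ)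
  (st : Fin m → Fin T → ℝ) (s : Fin m → ℝ)

/-- zero out the coordinates with zero valuation -/
def supportize (x : Fin n → Fin m → Fin T → ℝ) : Fin n → Fin m → Fin T → ℝ :=
  fun i j t => v i j * x i j t

lemma supportize_nonneg (hv : ∀ i j, v i j = 0 ∨ v i j = 1)
    (x : Fin n → Fin m → Fin T → ℝ) (hx0 : ∀ i j t, 0 ≤ x i j t) :
    ∀ i j t, 0 ≤ supportize v x i j t := by
  intro i j t
  unfold supportize
  rcases hv i j with h | h <;> rw [h] <;> simp [hx0 i j t]

lemma supportize_le (hv : ∀ i j, v i j = 0 ∨ v i j = 1)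
    (x : Fin n → Fin m → Fin T → ℝ) (hx0 : ∀ i j t, 0 ≤ x i j t) :
    ∀ i j t, supportize v x i j t ≤ x i j t := by
  intro i j t
  unfold supportize
  rcases hv i j with h | h <;> rw [h] <;> simp [hx0 i j t]

lemma supportize_feasible (hv : ∀ i j, v i j = 0 ∨ v i j = 1)
    (x : Fin n → Fin m → Fin T → ℝ) (hxf : FeasibleMP n m T st s x) :
    FeasibleMP n m T st s (supportize v x) := by
  obtain ⟨hx0, hxst, hxs⟩ := hxf
  refine ⟨supportize_nonneg v hv x hx0, ?_, ?_⟩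
  · intro j t
    refine le_trans ?_ (hxst j t)
    exact Finset.sum_le_sum fun i _ => supportize_le v hv x hx0 i j t
  · intro j
    refine le_trans ?_ (hxs j)
    exact Finset.sum_le_sum fun t _ => Finset.sum_le_sum fun i _ =>
      supportize_le v hv x hx0 i j t

lemma supportize_supp (hv : ∀ i j, v i j = 0 ∨ v i j = 1)
    (x : Fin n → Fin m → Fin T → ℝ) :
    ∀ i j t, supportize v x i j t ≠ 0 → v i j = 1 := by
  intro i j t h
  rcases hv i j with h1 | h1
  · exfalso; apply h; unfold supportize; rw [h1]; ring
  · exact h1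

lemma supportize_util (hv : ∀ i j, v i j = 0 ∨ v i j = 1)
    (x : Fin n → Fin m → Fin T → ℝ) (p : Fin n × Fin T) :
    util v d (supportize v x) p = util v d x p := by
  unfold util supportize
  congr 1
  apply Finset.sum_congr rfl
  intro j _
  rcases hv p.1 j with h | h <;> rw [h] <;> ring

lemma supportize_tot (x : Fin n → Fin m → Fin T → ℝ) (j : Fin m) :
    tot (supportize v x) j = ∑ t, ∑ i, v i j * x i j t := rfl

/-- the bottleneck property at threshold `c` -/
def Star (x : Fin n → Fin m → Fin T → ℝ) : Prop :=
  ∀ c : ℝ, ∀ y, FeasibleMP n m T st s y →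
    ∑ p ∈ univ.filter (fun p => util v d x p ≤ c), util v d y p
      ≤ ∑ p ∈ univ.filter (fun p => util v d x p ≤ c), util v d x p

/-- key dichotomy: either an augmenting family exists, or the bottleneck bound holds -/
lemma key (hv : ∀ i j, v i j = 0 ∨ v i j = 1)
    (x : Fin n → Fin m → Fin T → ℝ) (hxf : FeasibleMP n m T st s x)
    (hsupp : ∀ i j t, x i j t ≠ 0 → v i j = 1) (c : ℝ) :
    (∃ a b : Fin n × Fin T, util v d x a ≤ c ∧ c < util v d x b ∧
      ∃ ε₀ : ℝ, 0 < ε₀ ∧ ∀ ε, 0 < ε → ε ≤ ε₀ → ∃ z, FeasibleMP n m T st s z ∧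
        ∀ p, util v d z p = util v d x p + (if p = a then ε else 0)
          - (if p = b then ε else 0)) ∨
    (∃ a : Fin n × Fin T, util v d x a ≤ c ∧
      ∃ ε₀ : ℝ, 0 < ε₀ ∧ ∀ ε, 0 < ε → ε ≤ ε₀ → ∃ z, FeasibleMP n m T st s z ∧
        ∀ p, util v d z p = util v d x p + (if p = a then ε else 0)) ∨
    (∀ y, FeasibleMP n m T st s y →
      ∑ p ∈ univ.filter (fun p => util v d x p ≤ c), util v d y p
        ≤ ∑ p ∈ univ.filter (fun p => util v d x p ≤ c), util v d x p) := by
  classical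
  obtain ⟨hx0, hxst, hxs⟩ := hxf
  set A : Finset (Fin n × Fin T) := univ.filter (fun p => util v d x p ≤ c) with hA
  by_cases hbad1 : ∃ p : Fin n × Fin T, Reach v st x A (.inl p) ∧ p ∉ A
  · left
    obtain ⟨b, hreach, hbA⟩ := hbad1
    have hgoal := reach_aug v d st x hx0 hxst hsupp hreach
    obtain ⟨a, haA, C, ε₀, hε₀, H⟩ := hgoal
    refine ⟨a, b, ?_, ?_, ε₀, hε₀, ?_⟩
    · exact (Finset.mem_filter.1 haA).2
    · have := hbA
      rw [hA, Finset.mem_filter] at this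
      push_neg at this
      exact this (Finset.mem_univ b)
    · intro ε hε hεle
      obtain ⟨z, ⟨hz0, _, hzst, _⟩, hztot, hzutil⟩ := H ε hε hεle
      exact ⟨z, ⟨hz0, hzst, fun j => le_trans (hztot j) (hxs j)⟩, hzutil⟩
  · by_cases hbad2 : ∃ j, Reach v st x A (.inr j) ∧ tot x j < s j
    · right; left
      obtain ⟨j₀, hreach, hslack⟩ := hbad2
      have hgoal := reach_aug v d st x hx0 hxst hsupp hreach
      obtain ⟨a, haA, C, ε₀, hε₀, H⟩ := hgoal
      refine ⟨a, (Finset.mem_filter.1 haA).2,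
        min ε₀ (s j₀ - tot x j₀), lt_min hε₀ (by linarith), ?_⟩
      intro ε hε hεle
      obtain ⟨z, ⟨hz0, _, hzst, _⟩, hztot, hztotj, hzutil⟩ :=
        H ε hε (le_trans hεle (min_le_left _ _))
      refine ⟨z, ⟨hz0, hzst, ?_⟩, hzutil⟩
      intro j
      by_cases hj : j = j₀
      · rw [hj]
        have h1 : ε ≤ s j₀ - tot x j₀ := le_trans hεle (min_le_right _ _)
        have := hztotj
        unfold tot at *
        linarith
      · exact le_trans (hztot j hj) (hxs j)
    · right; right
      intro y hyf
      push_neg at hbad1 hbad2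
      have H1 : ∀ p, Reach v st x A (.inl p) → p ∈ A := by
        intro p hp
        by_contra hcon
        exact hcon (hbad1 p hp)
      have H2 : ∀ j, Reach v st x A (.inr j) → s j ≤ tot x j := by
        intro j hj
        have := hbad2 j hj
        linarith
      obtain ⟨hy0, hyst, hys⟩ := hyf
      set ys := supportize v y with hys'
      have hcut := cut_sum v d st s x hx0 hxst hxs hsupp H1 H2 ys
        (supportize_nonneg v hv y hy0)
        (fun j t => le_trans (Finset.sum_le_sum fun i _ => supportize_le v hv y hy0 i j t)
          (hyst j t))
        (fun j => le_trans (Finset.sum_le_sum fun t _ => Finset.sum_le_sum fun i _ =>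
          supportize_le v hv y hy0 i j t) (hys j))
        (supportize_supp v hv y)
      have heq : ∑ p ∈ A, util v d ys p = ∑ p ∈ A, util v d y p :=
        Finset.sum_congr rfl fun p _ => supportize_util v d hv y p
      rw [heq] at hcut
      exact hcut

lemma pvec_eq (y : Fin n → Fin m → Fin T → ℝ) :
    perPeriodUtilVec n m T v d y = fun k => util v d y (finProdFinEquiv.symm k) := rfl

lemma sum_filter_bridge (f g : Fin n × Fin T → ℝ) (c : ℝ) :
    ∑ k ∈ univ.filter (fun k : Fin (n * T) => f (finProdFinEquiv.symm k) ≤ c),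
      g (finProdFinEquiv.symm k)
      = ∑ p ∈ univ.filter (fun p => f p ≤ c), g p := by
  classical
  apply Finset.sum_nbij' (fun k => finProdFinEquiv.symm k) (fun p => finProdFinEquiv p)
  · intro k hk
    exact Finset.mem_filter.2 ⟨Finset.mem_univ _, (Finset.mem_filter.1 hk).2⟩
  · intro p hp
    refine Finset.mem_filter.2 ⟨Finset.mem_univ _, ?_⟩
    rw [Equiv.symm_apply_apply]
    exact (Finset.mem_filter.1 hp).2
  · intro k _; exact Equiv.apply_symm_apply _ _
  · intro p _; exact Equiv.symm_apply_apply _ _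
  · intro k _; rfl

/-- LHS (Nash optimality) implies the bottleneck property -/
lemma star_of_lhs (hv : ∀ i j, v i j = 0 ∨ v i j = 1)
    (x : Fin n → Fin m → Fin T → ℝ) (hxf : FeasibleMP n m T st s x)
    (hsupp : ∀ i j t, x i j t ≠ 0 → v i j = 1)
    (hupos : ∀ p, 0 < util v d x p)
    (hmax : ∀ y, FeasibleMP n m T st s y → (∀ p, 0 < util v d y p) →
      ∏ p, util v d y p ≤ ∏ p, util v d x p) :
    Star v d st s x := by
  classical
  intro c y hyf
  rcases key v d st s hv x hxf hsupp c with
    ⟨a, b, hua, hub, ε₀, hε₀, H⟩ | ⟨a, hua, ε₀, hε₀, H⟩ | hcut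
  · exfalso
    set u := util v d x with hu
    have hab : u a < u b := lt_of_le_of_lt hua hub
    set ε := min ε₀ ((u b - u a) / 2) with hε
    have hεpos : 0 < ε := lt_min hε₀ (by linarith)
    have hεle : ε ≤ (u b - u a) / 2 := min_le_right _ _
    obtain ⟨z, hzf, hzutil⟩ := H ε hεpos (min_le_left _ _)
    have hzpos : ∀ p, 0 < util v d z p := by
      intro p
      rw [hzutil p]
      by_cases h1 : p = a
      · rw [h1]
        have hne : a ≠ b := by intro hcon; rw [hcon] at hab; exact lt_irrefl _ hab
        rw [if_pos rfl, if_neg hne]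
        have := hupos a
        linarith
      · by_cases h2 : p = b
        · rw [h2]
          have hne : b ≠ a := by intro hcon; rw [hcon] at hab; exact lt_irrefl _ hab
          rw [if_neg hne, if_pos rfl]
          have := hupos b
          have := hupos a
          linarith
        · rw [if_neg h1, if_neg h2]
          have := hupos p
          linarith
    have hle := hmax z hzf hzpos
    have hgt : ∏ p, util v d x p < ∏ p, util v d z p := by
      have heq : ∏ p, util v d z p
          = ∏ p, (u p + (if p = a then ε else 0) - (if p = b then ε else 0)) :=
        Finset.prod_congr rfl fun p _ => hzutil p
      rw [heq]
      apply prod_two_bump_gt u hupos a b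
        (by intro hcon; rw [hcon] at hab; exact lt_irrefl _ hab) ε hεpos
      linarith
    linarith
  · exfalso
    obtain ⟨z, hzf, hzutil⟩ := H ε₀ hε₀ le_rfl
    have hzpos : ∀ p, 0 < util v d z p := by
      intro p
      rw [hzutil p]
      by_cases h1 : p = a
      · rw [h1, if_pos rfl]; have := hupos a; linarith
      · rw [if_neg h1]; have := hupos p; linarith
    have hle := hmax z hzf hzpos
    have hgt : ∏ p, util v d x p < ∏ p, util v d z p := by
      have heq : ∏ p, util v d z p
          = ∏ p, (util v d x p + (if p = a then ε₀ else 0)) :=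
        Finset.prod_congr rfl fun p _ => hzutil p
      rw [heq]
      exact prod_one_bump_gt (util v d x) hupos a ε₀ hε₀
    linarith
  · exact hcut y hyf

/-- RHS (leximin optimality) implies the bottleneck property -/
lemma star_of_rhs (hv : ∀ i j, v i j = 0 ∨ v i j = 1)
    (x : Fin n → Fin m → Fin T → ℝ) (hxf : FeasibleMP n m T st s x)
    (hsupp : ∀ i j t, x i j t ≠ 0 → v i j = 1)
    (hnolex : ¬ ∃ y, FeasibleMP n m T st s y ∧
      LexGt (perPeriodUtilVec n m T v d y) (perPeriodUtilVec n m T v d x)) :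
    Star v d st s x := by
  classical
  intro c y hyf
  rcases key v d st s hv x hxf hsupp c with
    ⟨a, b, hua, hub, ε₀, hε₀, H⟩ | ⟨a, hua, ε₀, hε₀, H⟩ | hcut
  · exfalso
    set u := util v d x with hu
    have hab : u a < u b := lt_of_le_of_lt hua hub
    set ε := min ε₀ ((u b - u a) / 2) with hε
    have hεpos : 0 < ε := lt_min hε₀ (by linarith)
    have hεle : ε ≤ (u b - u a) / 2 := min_le_right _ _
    obtain ⟨z, hzf, hzutil⟩ := H ε hεpos (min_le_left _ _)
    apply hnolex
    refine ⟨z, hzf, ?_⟩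
    rw [pvec_eq, pvec_eq]
    have heq : (fun k : Fin (n * T) => util v d z (finProdFinEquiv.symm k))
        = fun k => (fun k' : Fin (n * T) => u (finProdFinEquiv.symm k')) k
          + (if k = finProdFinEquiv a then ε else 0)
          - (if k = finProdFinEquiv b then ε else 0) := by
      funext k
      rw [hzutil]
      have e1 : (finProdFinEquiv.symm k = a) = (k = finProdFinEquiv a) := by
        apply propext
        constructor
        · intro h; rw [← h, Equiv.apply_symm_apply]
        · intro h; rw [h, Equiv.symm_apply_apply]
      have e2 : (finProdFinEquiv.symm k = b) = (k = finProdFinEquiv b) := by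
        apply propext
        constructor
        · intro h; rw [← h, Equiv.apply_symm_apply]
        · intro h; rw [h, Equiv.symm_apply_apply]
      simp only [e1, e2]
    rw [heq]
    apply lexGt_two_bump (fun k' => u (finProdFinEquiv.symm k'))
      (finProdFinEquiv a) (finProdFinEquiv b) ε hεpos
    simp only [Equiv.symm_apply_apply]
    linarith
  · exfalso
    obtain ⟨z, hzf, hzutil⟩ := H ε₀ hε₀ le_rfl
    apply hnolex
    refine ⟨z, hzf, ?_⟩
    rw [pvec_eq, pvec_eq]
    have heq : (fun k : Fin (n * T) => util v d z (finProdFinEquiv.symm k))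
        = fun k => (fun k' : Fin (n * T) => util v d x (finProdFinEquiv.symm k')) k
          + (if k = finProdFinEquiv a then ε₀ else 0) := by
      funext k
      rw [hzutil]
      have e1 : (finProdFinEquiv.symm k = a) = (k = finProdFinEquiv a) := by
        apply propext
        constructor
        · intro h; rw [← h, Equiv.apply_symm_apply]
        · intro h; rw [h, Equiv.symm_apply_apply]
      simp only [e1]
    rw [heq]
    exact lexGt_one_bump _ (finProdFinEquiv a) ε₀ hε₀
  · exact hcut y hyf

/-- the bottleneck property implies LHS -/
lemma lhs_of_star (x : Fin n → Fin m → Fin T → ℝ)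
    (hupos : ∀ p, 0 < util v d x p) (hstar : Star v d st s x) :
    ∀ y, FeasibleMP n m T st s y → (∀ p, 0 < util v d y p) →
      ∏ p, util v d y p ≤ ∏ p, util v d x p := by
  classical
  intro y hyf hypos
  apply prod_le_of_ratio (util v d x) (util v d y) hupos hypos
  have hcard : (Fintype.card (Fin n × Fin T) : ℝ)
      = ((Fintype.card (Fin n × Fin T) : ℕ) : ℝ) := rfl
  apply ratio_sum_le (util v d x) (util v d y) hupos
  intro c
  exact hstar c y hyf

/-- the bottleneck property implies RHS -/
lemma rhs_of_star (x : Fin n → Fin m → Fin T → ℝ) (hstar : Star v d st s x) :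
    ¬ ∃ y, FeasibleMP n m T st s y ∧
      LexGt (perPeriodUtilVec n m T v d y) (perPeriodUtilVec n m T v d x) := by
  classical
  rintro ⟨y, hyf, hlex⟩
  rw [pvec_eq, pvec_eq] at hlex
  obtain ⟨c, hclt⟩ := lexGt_exists_threshold
    (fun k : Fin (n * T) => util v d x (finProdFinEquiv.symm k))
    (fun k : Fin (n * T) => util v d y (finProdFinEquiv.symm k)) hlex
  rw [sum_filter_bridge (util v d x) (util v d x) c,
    sum_filter_bridge (util v d x) (util v d y) c] at hclt
  have := hstar c y hyf
  linarith

end Assemble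

end MNWdev

open MNWdev

/-- In the multi-period geometric-mean-utility model with per-period demands,
binary valuations and unit budgets, under the assumption that some feasible
allocation gives every buyer strictly positive per-period utilities, a feasible
allocation with positive per-period utilities maximizes
`∏ i, ∏ t, u i t` (equivalently, the EG-Time-geo-mean program) iff it is
leximin-optimal with respect to the vector of per-buyer-per-period
utilities. -/
theorem geo_mean_mnw_iff_leximin
    (n m T : ℕ) (hT : 0 < T)
    (v : Fin n → Fin m → ℝ) (d : Fin n → Fin T → ℝ)
    (st : Fin m → Fin T → ℝ) (s : Fin m → ℝ)
    (hv : ∀ i j, v i j = 0 ∨ v i j = 1) (hd : ∀ i t, 0 ≤ d i t)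
    (hexist : ∃ y, FeasibleMP n m T st s y ∧
      ∀ i t, 0 < (∑ j, v i j * y i j t) - d i t)
    (x : Fin n → Fin m → Fin T → ℝ) (hxf : FeasibleMP n m T st s x)
    (hupos : ∀ i t, 0 < (∑ j, v i j * x i j t) - d i t) :
    (∀ y, FeasibleMP n m T st s y →
      (∀ i t, 0 < (∑ j, v i j * y i j t) - d i t) →
      ∏ i, ∏ t, ((∑ j, v i j * y i j t) - d i t)
        ≤ ∏ i, ∏ t, ((∑ j, v i j * x i j t) - d i t))
    ↔
    (¬ ∃ y, FeasibleMP n m T st s y ∧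
        LexGt (perPeriodUtilVec n m T v d y) (perPeriodUtilVec n m T v d x)) := by
  classical
  have hprod : ∀ y : Fin n → Fin m → Fin T → ℝ,
      (∏ i, ∏ t, ((∑ j, v i j * y i j t) - d i t)) = ∏ p : Fin n × Fin T, util v d y p := by
    intro y
    rw [Fintype.prod_prod_type (fun p : Fin n × Fin T => util v d y p)]
    rfl
  have hupos' : ∀ p : Fin n × Fin T, 0 < util v d x p := fun p => hupos p.1 p.2
  set xs := supportize v x with hxsdef
  have hxsf : FeasibleMP n m T st s xs := supportize_feasible v st s hv x hxf
  have hxssupp : ∀ i j t, xs i j t ≠ 0 → v i j = 1 := supportize_supp v hv x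
  have hxsutil : ∀ p, util v d xs p = util v d x p := supportize_util v d hv x
  have hxspos : ∀ p, 0 < util v d xs p := fun p => (hxsutil p).symm ▸ hupos' p
  have hpvec : perPeriodUtilVec n m T v d xs = perPeriodUtilVec n m T v d x := by
    funext k
    rw [pvec_eq, pvec_eq]
    exact hxsutil _
  have hfiltereq : ∀ c : ℝ, (univ.filter fun p => util v d xs p ≤ c)
      = (univ.filter fun p => util v d x p ≤ c) := by
    intro c
    apply Finset.filter_congr
    intro p _
    rw [hxsutil p]
  have hprodxs : (∏ p : Fin n × Fin T, util v d xs p) = ∏ p : Fin n × Fin T, util v d x p :=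
    Finset.prod_congr rfl fun p _ => hxsutil p
  constructor
  · -- LHS → RHS
    intro hmax
    have hmax' : ∀ y, FeasibleMP n m T st s y → (∀ p : Fin n × Fin T, 0 < util v d y p) →
        (∏ p : Fin n × Fin T, util v d y p) ≤ ∏ p : Fin n × Fin T, util v d xs p := by
      intro y hyf hypos
      rw [hprodxs, ← hprod y, ← hprod x]
      exact hmax y hyf (fun i t => hypos (i, t))
    have hstar := star_of_lhs v d st s hv xs hxsf hxssupp hxspos hmax'
    have hres := rhs_of_star v d st s xs hstar
    rw [hpvec] at hres
    exact hres
  · -- RHS → LHS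
    intro hnolex
    have hnolex' : ¬ ∃ y, FeasibleMP n m T st s y ∧
        LexGt (perPeriodUtilVec n m T v d y) (perPeriodUtilVec n m T v d xs) := by
      rw [hpvec]
      exact hnolex
    have hstar := star_of_rhs v d st s hv xs hxsf hxssupp hnolex'
    intro y hyf hypos
    have h1 := lhs_of_star v d st s xs hxspos hstar y hyf (fun p => hypos p.1 p.2)
    rw [hprodxs] at h1
    rw [hprod y, hprod x]
    exact h1
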